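/- arXiv:1112.3602 — 5 statements merged into one kernel-verified Lean document; each statement's English description precedes it below -/
import Mathlib

section
/- Let T ⊆ ℝ^n be a closed set, let I ⊆ ℤ_+^n be a finite set with 0 ∈ I such that max_{i∈I} |i| = 2k for some k ∈ ℕ and 2k·e_ι ∈ I for every 1 ≤ ι ≤ n, let g = (g_i)_{i∈I} be real numbers with g_0 = 1, and fix ρ ∈ L^1(T, dt) with ρ > 0 a.e. on T. If there exists f ∈ L^1(T, dt) with f ≥ 0 a.e., ∫_T |t^i| f(t) dt < ∞ and ∫_T t^i f(t) dt = g_i for all i ∈ I, then the functional L(λ) = Σ_{i∈I} g_i λ_i − ∫_T e^{Σ_{i∈I} λ_i t^i} ρ(t) dt on ℝ^N (N = card I) is bounded from above and attains its supremum at some point λ* ∈ ℝ^N. (No regularity assumption on T is needed for this implication.) -/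
open MeasureTheory Real ENNReal Filter

/-- The monomial `t ^ i = t₁^{i₁} ⋯ tₙ^{iₙ}`. -/
noncomputable def monom {n : ℕ} (i : Fin n → ℕ) (t : Fin n → ℝ) : ℝ := ∏ j, t j ^ i j

/-- The concave Lagrangian functional
`L(λ) = ∑_{i∈I} g_i λ_i − ∫_T e^{∑_{i∈I} λ_i t^i} ρ(t) dt`, with values in `ℝ ∪ {−∞}`. -/
noncomputable def Lag {n : ℕ} (T : Set (Fin n → ℝ)) (I : Finset (Fin n → ℕ))
    (g : (Fin n → ℕ) → ℝ) (ρ : (Fin n → ℝ) → ℝ) (lam : {i // i ∈ I} → ℝ) : EReal :=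
  ((∑ i ∈ I.attach, g i.1 * lam i : ℝ) : EReal)
    - ((∫⁻ t in T, ENNReal.ofReal (Real.exp (∑ i ∈ I.attach, lam i * monom i.1 t) * ρ t)) : EReal)

set_option maxHeartbeats 1000000

theorem mvpoly_zero_set : ∀ {n : ℕ} (p : MvPolynomial (Fin n) ℝ), p ≠ 0 →
    volume {x : Fin n → ℝ | MvPolynomial.eval x p = 0} = 0 := by
  intro n
  induction n with
  | zero =>
      intro p hp
      convert measure_empty
      · ext x
        simp only [Set.mem_setOf_eq, Set.mem_empty_iff_false, iff_false]
        rw [p.eq_C_of_isEmpty]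
        simp only [MvPolynomial.eval_C]
        intro h
        exact hp (by rw [p.eq_C_of_isEmpty, h, map_zero])
      · infer_instance
  | succ m ih =>
      intro p hp
      have hScont : Continuous fun x : Fin (m+1) → ℝ => MvPolynomial.eval x p :=
        MvPolynomial.continuous_eval p
      have hSmeas : MeasurableSet {x : Fin (m+1) → ℝ | MvPolynomial.eval x p = 0} :=
        (isClosed_eq hScont continuous_const).measurableSet
      have hmp := (measurePreserving_piFinSuccAbove (fun _ : Fin (m+1) => (volume : Measure ℝ)) 0).symm
      set e := MeasurableEquiv.piFinSuccAbove (fun _ : Fin (m+1) => ℝ) 0 with he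
      set S := {x : Fin (m+1) → ℝ | MvPolynomial.eval x p = 0} with hS
      have key : (volume : Measure (Fin (m+1) → ℝ)) S
          = (((volume : Measure ℝ)).prod (Measure.pi fun _ : Fin m => (volume : Measure ℝ))) (e.symm ⁻¹' S) := by
        rw [volume_pi]
        rw [← hmp.measure_preimage hSmeas.nullMeasurableSet]
      rw [key]
      have hsmeas : MeasurableSet (e.symm ⁻¹' S) := e.symm.measurable hSmeas
      rw [Measure.prod_apply_symm hsmeas]
      -- section description
      set q := MvPolynomial.finSuccEquiv ℝ m p with hq
      have hq0 : q ≠ 0 := by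
        intro h
        exact hp ((MvPolynomial.finSuccEquiv ℝ m).injective (by rw [map_zero]; exact h))
      obtain ⟨d, hd⟩ : ∃ d, q.coeff d ≠ 0 := by
        by_contra h
        push_neg at h
        exact hq0 (Polynomial.ext fun d => by simp [h d])
      have hsec : ∀ x : Fin m → ℝ, MvPolynomial.eval x (q.coeff d) ≠ 0 →
          (volume : Measure ℝ) ((fun y => (y, x)) ⁻¹' (e.symm ⁻¹' S)) = 0 := by
        intro x hx
        have hset : ((fun y => (y, x)) ⁻¹' (e.symm ⁻¹' S))
            = {y : ℝ | Polynomial.eval y (Polynomial.map (MvPolynomial.eval x) q) = 0} := by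
          ext y
          simp only [Set.mem_preimage, hS, Set.mem_setOf_eq, he,
            MeasurableEquiv.piFinSuccAbove_symm_apply]
          rw [show ((Fin.insertNthEquiv (fun _ : Fin (m+1) => ℝ) 0) (y, x)) = Fin.cons y x by
            simp [Fin.insertNthEquiv, Fin.insertNth_zero]]
          rw [MvPolynomial.eval_eq_eval_mv_eval']
        rw [hset]
        have hmapne : Polynomial.map (MvPolynomial.eval x) q ≠ 0 := by
          intro h
          apply hx
          have := congrArg (fun r => Polynomial.coeff r d) h
          simpa using this
        exact (Polynomial.finite_setOf_isRoot hmapne).measure_zero _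
      have hbad : (Measure.pi fun _ : Fin m => (volume : Measure ℝ))
          {x | MvPolynomial.eval x (q.coeff d) = 0} = 0 := by
        rw [← volume_pi]
        exact ih _ hd
      have hne : ∀ᵐ x ∂(Measure.pi fun _ : Fin m => (volume : Measure ℝ)),
          MvPolynomial.eval x (q.coeff d) ≠ 0 := by
        rw [ae_iff]
        simpa using hbad
      have hae : (fun x : Fin m → ℝ => (volume : Measure ℝ) ((fun y => (y, x)) ⁻¹' (e.symm ⁻¹' S)))
          =ᵐ[Measure.pi fun _ : Fin m => (volume : Measure ℝ)] 0 := by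
        filter_upwards [hne] with x hx
        exact hsec x hx
      rw [lintegral_congr_ae hae]; simp


theorem poly_indep {n : ℕ} (I : Finset (Fin n → ℕ)) (θ : {i // i ∈ I} → ℝ) (hθ : θ ≠ 0) :
    volume {t : Fin n → ℝ | ∑ i ∈ I.attach, θ i * monom i.1 t = 0} = 0 := by
  classical
  set P : MvPolynomial (Fin n) ℝ :=
    ∑ i ∈ I.attach, MvPolynomial.monomial (Finsupp.equivFunOnFinite.symm i.1) (θ i) with hPdef
  have heval : ∀ t : Fin n → ℝ, MvPolynomial.eval t P = ∑ i ∈ I.attach, θ i * monom i.1 t := by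
    intro t
    rw [hPdef, map_sum]
    refine Finset.sum_congr rfl fun i _ => ?_
    rw [MvPolynomial.eval_monomial]
    unfold monom
    congr 1
    rw [Finsupp.prod_fintype]
    · simp
    · intro j; simp
  have hP : P ≠ 0 := by
    intro h
    apply hθ
    funext i₀
    have : MvPolynomial.coeff (Finsupp.equivFunOnFinite.symm i₀.1) P = θ i₀ := by
      rw [hPdef, MvPolynomial.coeff_sum]
      rw [Finset.sum_eq_single i₀]
      · simp [MvPolynomial.coeff_monomial]
      · intro b _ hb
        rw [MvPolynomial.coeff_monomial, if_neg]
        intro hcontra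
        exact hb (Subtype.ext (Finsupp.equivFunOnFinite.symm.injective hcontra))
      · intro h'
        exact absurd (Finset.mem_attach _ _) h'
    rw [h] at this
    simp only [MvPolynomial.coeff_zero] at this
    exact this.symm
  have := mvpoly_zero_set P hP
  convert this using 2
  ext t
  simp only [Set.mem_setOf_eq, heval t]


-- EReal helper
lemma ereal_sub_le_of {a b x : ℝ} {c : ℝ≥0∞} (hx0 : 0 ≤ x)
    (hx : ENNReal.ofReal x ≤ c) (hab : a - x ≤ b) : (a : EReal) - (c : EReal) ≤ (b : EReal) := by
  rcases eq_or_ne c ⊤ with rfl | hc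
  · simp only [EReal.coe_ennreal_top, EReal.sub_top]
    exact bot_le
  · have hcoe : (c : EReal) = ((c.toReal : ℝ) : EReal) := by
      rw [← ENNReal.ofReal_toReal hc, EReal.coe_ennreal_ofReal]
      simp [ENNReal.toReal_nonneg]
    rw [hcoe, ← EReal.coe_sub]
    have : x ≤ c.toReal := by
      have := ENNReal.toReal_mono hc hx
      rwa [ENNReal.toReal_ofReal hx0] at this
    exact_mod_cast by linarith
lemma ereal_le_sub_of {a s : ℝ} {c : ℝ≥0∞} (hc : c ≠ ⊤)
    (h : c.toReal ≤ a - s) : (s : EReal) ≤ (a : EReal) - (c : EReal) := by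
  have hcoe : (c : EReal) = ((c.toReal : ℝ) : EReal) := by
    rw [← ENNReal.ofReal_toReal hc, EReal.coe_ennreal_ofReal]
    simp [ENNReal.toReal_nonneg]
  rw [hcoe, ← EReal.coe_sub]
  exact_mod_cast by linarith
lemma exp_sq_quarter {x : ℝ} (hx : 0 ≤ x) : x^2/4 ≤ Real.exp x := by
  have h1 : Real.exp (x/2) * Real.exp (x/2) = Real.exp x := by
    rw [← Real.exp_add]; ring_nf
  have h2 := Real.add_one_le_exp (x/2)
  nlinarith
/-- Implication (a) ⇒ (b) of Theorem 3: if the truncated moment problem on the closed set `T`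
has an `L¹` solution, then the Lagrangian is bounded above and attains its supremum.
No regularity assumption on `T` (nor on `I`) is needed. -/
theorem stmt_1 {n : ℕ} (k : ℕ) (hk : 0 < k)
    (T : Set (Fin n → ℝ)) (hTclosed : IsClosed T)
    (I : Finset (Fin n → ℕ)) (hI0 : (0 : Fin n → ℕ) ∈ I)
    (hdeg : ∀ i ∈ I, ∑ m, i m ≤ 2 * k) (hdeg' : ∃ i ∈ I, ∑ m, i m = 2 * k)
    (haxes : ∀ ι : Fin n, (fun m => if m = ι then 2 * k else 0) ∈ I)
    (g : (Fin n → ℕ) → ℝ) (hg0 : g 0 = 1)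
    (ρ : (Fin n → ℝ) → ℝ) (hρint : Integrable ρ (volume.restrict T))
    (hρpos : ∀ᵐ t ∂(volume.restrict T), 0 < ρ t)
    (f : (Fin n → ℝ) → ℝ) (hfint : Integrable f (volume.restrict T))
    (hf0 : ∀ᵐ t ∂(volume.restrict T), 0 ≤ f t)
    (hmom : ∀ i ∈ I, Integrable (fun t => monom i t * f t) (volume.restrict T))
    (hmg : ∀ i ∈ I, ∫ t in T, monom i t * f t = g i) :
    (∃ M : ℝ, ∀ lam : {i // i ∈ I} → ℝ, Lag T I g ρ lam ≤ (M : EReal)) ∧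
      ∃ lam' : {i // i ∈ I} → ℝ,
        ∀ lam : {i // i ∈ I} → ℝ, Lag T I g ρ lam ≤ Lag T I g ρ lam' := by
  classical
  set pol : ({i // i ∈ I} → ℝ) → (Fin n → ℝ) → ℝ :=
    fun lam t => ∑ i ∈ I.attach, lam i * monom i.1 t with hpol
  set gd : ({i // i ∈ I} → ℝ) → ℝ := fun lam => ∑ i ∈ I.attach, g i.1 * lam i with hgd
  set J : ({i // i ∈ I} → ℝ) → ℝ≥0∞ :=
    fun lam => ∫⁻ t in T, ENNReal.ofReal (Real.exp (pol lam t) * ρ t) with hJ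
  have hLag : ∀ lam, Lag T I g ρ lam = ((gd lam : ℝ) : EReal) - ((J lam : ℝ≥0∞) : EReal) :=
    fun lam => rfl
  -- continuity in t
  have hcont : ∀ lam, Continuous (pol lam) := by
    intro lam
    exact continuous_finset_sum _ fun i _ => continuous_const.mul
      (continuous_finset_prod _ fun j _ => (continuous_apply j).pow _)
  -- continuity in lam (for fixed t)
  have hcont' : ∀ t, Continuous (fun lam => pol lam t) := by
    intro t
    exact continuous_finset_sum _ fun i _ => (continuous_apply i).mul continuous_const
  have hgdcont : Continuous gd :=
    continuous_finset_sum _ fun i _ => continuous_const.mul (continuous_apply i)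
  have haem : ∀ lam, AEMeasurable (fun t => ENNReal.ofReal (Real.exp (pol lam t) * ρ t))
      (volume.restrict T) := by
    intro lam
    exact ENNReal.measurable_ofReal.comp_aemeasurable
      (((Real.continuous_exp.comp (hcont lam)).measurable.aemeasurable).mul
        hρint.aestronglyMeasurable.aemeasurable)
  have hμfin : ∫⁻ t in T, ENNReal.ofReal (ρ t) ∂volume < ⊤ := hρint.lintegral_lt_top
  set G : ℝ := ∑ i ∈ I.attach, |g i.1| with hGdef
  have hGnn : 0 ≤ G := Finset.sum_nonneg fun i _ => abs_nonneg _
  have hgd_le : ∀ lam, gd lam ≤ G * ‖lam‖ := by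
    intro lam
    calc gd lam ≤ |gd lam| := le_abs_self _
    _ ≤ ∑ i ∈ I.attach, |g i.1 * lam i| := Finset.abs_sum_le_sum_abs _ _
    _ ≤ ∑ i ∈ I.attach, |g i.1| * ‖lam‖ := by
        refine Finset.sum_le_sum fun i _ => ?_
        rw [abs_mul]
        exact mul_le_mul_of_nonneg_left (norm_le_pi_norm lam i) (abs_nonneg _)
    _ = G * ‖lam‖ := by rw [← Finset.sum_mul]
  have hJ0 : ∀ lam, Lag T I g ρ lam ≤ ((gd lam : ℝ) : EReal) := by
    intro lam
    rw [hLag]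
    have : ((gd lam : ℝ) : EReal) - (J lam : EReal) ≤ ((gd lam : ℝ) : EReal) - (0 : EReal) := by
      exact EReal.sub_le_sub le_rfl (EReal.coe_ennreal_nonneg _)
    rwa [sub_zero] at this
  -- linearity in lam
  have hpol_smul : ∀ (r : ℝ) (θ : {i // i ∈ I} → ℝ) (t), pol (r • θ) t = r * pol θ t := by
    intro r θ t
    simp only [hpol, Pi.smul_apply, smul_eq_mul, Finset.mul_sum]
    exact Finset.sum_congr rfl fun i _ => by ring
  have hgd_smul : ∀ (r : ℝ) (θ : {i // i ∈ I} → ℝ), gd (r • θ) = r * gd θ := by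
    intro r θ
    simp only [hgd, Pi.smul_apply, smul_eq_mul, Finset.mul_sum]
    exact Finset.sum_congr rfl fun i _ => by ring
  -- Step 1: key coercivity constant
  have key : ∃ ε : ℝ, 0 < ε ∧ ∀ θ : {i // i ∈ I} → ℝ, ‖θ‖ = 1 →
      ENNReal.ofReal ε ≤ ∫⁻ t in T ∩ {t | ε ≤ pol θ t}, ENNReal.ofReal (ρ t) ∨ gd θ ≤ -ε := by
    by_contra hcon
    push_neg at hcon
    have hseq : ∀ j : ℕ, ∃ θ : {i // i ∈ I} → ℝ, ‖θ‖ = 1 ∧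
        (∫⁻ t in T ∩ {t | 1/((j:ℝ)+1) ≤ pol θ t}, ENNReal.ofReal (ρ t))
          < ENNReal.ofReal (1/((j:ℝ)+1)) ∧ -(1/((j:ℝ)+1)) < gd θ := by
      intro j
      obtain ⟨θ, h1, h2, h3⟩ := hcon (1/((j:ℝ)+1)) (by positivity)
      exact ⟨θ, h1, h2, by simpa using h3⟩
    choose θs hθn hθ1 hθ2 using hseq
    obtain ⟨θ, hθmem, φ, hφ, hconv⟩ := (isCompact_sphere (0 : {i // i ∈ I} → ℝ) 1).tendsto_subseq
      (fun j => mem_sphere_zero_iff_norm.mpr (hθn j))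
    have hθ1' : ‖θ‖ = 1 := mem_sphere_zero_iff_norm.mp hθmem
    have hθne : θ ≠ 0 := fun h => by rw [h] at hθ1'; simp at hθ1'
    have hinv : Tendsto (fun j : ℕ => 1/((φ j : ℝ)+1)) atTop (nhds 0) := by
      have h2 : Tendsto (fun m : ℕ => 1/((m : ℝ)+1)) atTop (nhds 0) :=
        tendsto_one_div_add_atTop_nhds_zero_nat
      exact h2.comp hφ.tendsto_atTop
    have hgdθ : 0 ≤ gd θ := by
      have h1 : Tendsto (fun j => gd (θs (φ j))) atTop (nhds (gd θ)) :=
        (hgdcont.tendsto θ).comp hconv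
      have h2 : Tendsto (fun j : ℕ => -(1/((φ j : ℝ)+1))) atTop (nhds 0) := by
        simpa using hinv.neg
      exact le_of_tendsto_of_tendsto' h2 h1 (fun j => (hθ2 (φ j)).le)
    -- Fatou argument : pol θ ≤ 0 a.e. on T
    set F : ℕ → (Fin n → ℝ) → ℝ≥0∞ := fun j t =>
      Set.indicator {t | 1/((φ j : ℝ)+1) ≤ pol (θs (φ j)) t}
        (fun t => ENNReal.ofReal (ρ t)) t with hF
    have hAm : ∀ j, MeasurableSet {t : Fin n → ℝ | 1/((φ j : ℝ)+1) ≤ pol (θs (φ j)) t} :=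
      fun j => (isClosed_le continuous_const (hcont _)).measurableSet
    have hρaem : AEMeasurable (fun t => ENNReal.ofReal (ρ t)) (volume.restrict T) :=
      ENNReal.measurable_ofReal.comp_aemeasurable hρint.aestronglyMeasurable.aemeasurable
    have hFmeas : ∀ j, AEMeasurable (F j) (volume.restrict T) :=
      fun j => hρaem.indicator (hAm j)
    have hFint : ∀ j, ∫⁻ t in T, F j t ≤ ENNReal.ofReal (1/((φ j : ℝ)+1)) := by
      intro j
      rw [hF, lintegral_indicator (hAm j) _, Measure.restrict_restrict (hAm j), Set.inter_comm]
      exact (hθ1 (φ j)).le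
    have hliminf : ∫⁻ t in T, liminf (fun j => F j t) atTop = 0 := by
      refine le_antisymm ?_ (zero_le)
      calc ∫⁻ t in T, liminf (fun j => F j t) atTop
          ≤ liminf (fun j => ∫⁻ t in T, F j t) atTop := lintegral_liminf_le' hFmeas
      _ ≤ liminf (fun j => ENNReal.ofReal (1/((φ j:ℝ)+1))) atTop :=
          Filter.liminf_le_liminf (Eventually.of_forall hFint)
      _ = 0 := by
          have h4 : Tendsto (fun j => ENNReal.ofReal (1/((φ j:ℝ)+1))) atTop (nhds 0) := by
            have := (ENNReal.continuous_ofReal.tendsto 0).comp hinv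
            simpa [Function.comp_def] using this
          exact h4.liminf_eq
    have hpt : ∀ t, 0 < pol θ t → liminf (fun j => F j t) atTop = ENNReal.ofReal (ρ t) := by
      intro t ht
      have h1 : Tendsto (fun j => pol (θs (φ j)) t) atTop (nhds (pol θ t)) :=
        ((hcont' t).tendsto θ).comp hconv
      have h3 : ∀ᶠ j in atTop, 1/((φ j:ℝ)+1) < pol (θs (φ j)) t := by
        have h4 : Tendsto (fun j => pol (θs (φ j)) t - 1/((φ j:ℝ)+1)) atTop
            (nhds (pol θ t - 0)) := h1.sub hinv
        rw [sub_zero] at h4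
        filter_upwards [h4.eventually (eventually_gt_nhds ht)] with j hj
        linarith
      have hev : (fun j => F j t) =ᶠ[atTop] (fun _ => ENNReal.ofReal (ρ t)) := by
        filter_upwards [h3] with j hj
        rw [hF]
        exact Set.indicator_of_mem
          (show t ∈ {t | 1/((φ j:ℝ)+1) ≤ pol (θs (φ j)) t} from hj.le)
          (fun t => ENNReal.ofReal (ρ t))
      exact (tendsto_const_nhds.congr' hev.symm).liminf_eq
    have hzero : ∫⁻ t in T ∩ {t | 0 < pol θ t}, ENNReal.ofReal (ρ t) = 0 := by
      have hSopen : MeasurableSet {t : Fin n → ℝ | 0 < pol θ t} :=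
        (isOpen_lt continuous_const (hcont θ)).measurableSet
      have hsub : ∫⁻ t in T, Set.indicator {t | 0 < pol θ t}
          (fun t => ENNReal.ofReal (ρ t)) t ≤ ∫⁻ t in T, liminf (fun j => F j t) atTop := by
        apply lintegral_mono
        intro t
        by_cases h : t ∈ {t | 0 < pol θ t}
        · rw [Set.indicator_of_mem h]
          exact (hpt t h).ge
        · rw [Set.indicator_of_notMem h]
          exact zero_le
      rw [lintegral_indicator hSopen _, Measure.restrict_restrict hSopen, Set.inter_comm] at hsub
      rw [hliminf] at hsub
      exact le_antisymm hsub (zero_le)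
    have hpolθ : ∀ᵐ t ∂(volume.restrict T), pol θ t ≤ 0 := by
      have hSopen : MeasurableSet {t : Fin n → ℝ | 0 < pol θ t} :=
        (isOpen_lt continuous_const (hcont θ)).measurableSet
      have hmeaszero : (volume.restrict T) {t | 0 < pol θ t} = 0 := by
        rw [← Measure.restrict_eq_zero]
        have h0 : ∫⁻ t, ENNReal.ofReal (ρ t) ∂((volume.restrict T).restrict {t | 0 < pol θ t}) = 0 := by
          rw [Measure.restrict_restrict hSopen, Set.inter_comm]
          exact hzero
        have haem2 : AEMeasurable (fun t => ENNReal.ofReal (ρ t))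
            ((volume.restrict T).restrict {t | 0 < pol θ t}) := hρaem.restrict
        have hae0 := (lintegral_eq_zero_iff' haem2).mp h0
        have hpos' : ∀ᵐ t ∂((volume.restrict T).restrict {t | 0 < pol θ t}), 0 < ρ t :=
          ae_restrict_of_ae hρpos
        have hfalse : ∀ᵐ t ∂((volume.restrict T).restrict {t | 0 < pol θ t}), False := by
          filter_upwards [hae0, hpos'] with t h1 h2
          rw [Pi.zero_apply] at h1
          exact absurd (ENNReal.ofReal_eq_zero.mp h1) (not_le.mpr h2)
        rw [← MeasureTheory.ae_eq_bot]
        exact Filter.eventually_false_iff_eq_bot.mp hfalse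
      rw [ae_iff]
      convert hmeaszero using 2
      ext t
      simp [not_le]
    -- integral identity
    have hpeq : ∀ t, pol θ t * f t = ∑ i ∈ I.attach, θ i * (monom i.1 t * f t) := by
      intro t
      rw [hpol, Finset.sum_mul]
      exact Finset.sum_congr rfl fun i _ => by ring
    have hintf : Integrable (fun t => pol θ t * f t) (volume.restrict T) := by
      rw [show (fun t => pol θ t * f t) = fun t => ∑ i ∈ I.attach, θ i * (monom i.1 t * f t)
        from funext hpeq]
      exact integrable_finset_sum _ fun i _ => (hmom i.1 i.2).const_mul _
    have hgdint : ∫ t in T, pol θ t * f t = gd θ := by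
      rw [show (fun t => pol θ t * f t) = fun t => ∑ i ∈ I.attach, θ i * (monom i.1 t * f t)
        from funext hpeq]
      rw [integral_finset_sum _ fun i _ => (hmom i.1 i.2).const_mul _]
      rw [hgd]
      refine Finset.sum_congr rfl fun i _ => ?_
      rw [integral_const_mul, hmg i.1 i.2, mul_comm]
    -- product vanishes a.e.
    have hnonneg : 0 ≤ᵐ[volume.restrict T] fun t => -(pol θ t * f t) := by
      filter_upwards [hpolθ, hf0] with t h1 h2
      simp only [Pi.zero_apply, le_neg]
      nlinarith
    have h0int : ∫ t in T, -(pol θ t * f t) = 0 := by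
      have h1 : 0 ≤ ∫ t in T, -(pol θ t * f t) := integral_nonneg_of_ae hnonneg
      rw [integral_neg, hgdint] at h1 ⊢
      linarith
    have hprod : ∀ᵐ t ∂(volume.restrict T), pol θ t * f t = 0 := by
      have := (integral_eq_zero_iff_of_nonneg_ae hnonneg hintf.neg).mp h0int
      filter_upwards [this] with t ht
      simpa using ht
    -- contradiction via polynomial independence
    have hZ' : ∀ᵐ t ∂(volume.restrict T), pol θ t ≠ 0 := by
      apply ae_restrict_of_ae
      rw [ae_iff]
      convert poly_indep I θ hθne using 2
      ext t
      simp [hpol]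
    have hfzero : ∀ᵐ t ∂(volume.restrict T), f t = 0 := by
      filter_upwards [hprod, hZ'] with t h1 h2
      rcases mul_eq_zero.mp h1 with h | h
      · exact absurd h h2
      · exact h
    have h1 : ∫ t in T, monom 0 t * f t = g 0 := hmg 0 hI0
    have h2 : ∫ t in T, monom 0 t * f t = 0 := by
      rw [integral_eq_zero_of_ae]
      filter_upwards [hfzero] with t ht
      simp [ht]
    rw [h1, hg0] at h2
    exact one_ne_zero h2
  obtain ⟨ε, hε, hkey⟩ := key
  -- Step 2: the dichotomy bound for every nonzero lam
  have bound : ∀ lam : {i // i ∈ I} → ℝ, lam ≠ 0 →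
      Lag T I g ρ lam ≤ ((G * ‖lam‖ - ε * Real.exp (ε * ‖lam‖) : ℝ) : EReal) ∨
      Lag T I g ρ lam ≤ ((-(ε * ‖lam‖) : ℝ) : EReal) := by
    intro lam hlam
    have hR : 0 < ‖lam‖ := norm_pos_iff.mpr hlam
    set R := ‖lam‖ with hRdef
    set θ := (R⁻¹ : ℝ) • lam with hθdef
    have hθn : ‖θ‖ = 1 := by
      rw [hθdef, norm_smul]
      simp [hRdef, abs_of_pos (inv_pos.mpr hR), inv_mul_cancel₀ (ne_of_gt hR)]
      exact inv_mul_cancel₀ (ne_of_gt hR)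
    have hlamR : lam = R • θ := by
      rw [hθdef, smul_smul, mul_inv_cancel₀ (ne_of_gt hR), one_smul]
    rcases hkey θ hθn with hca | hcb
    · left
      have hpollam : ∀ t, pol lam t = R * pol θ t := by
        intro t
        conv_lhs => rw [hlamR]
        exact hpol_smul R θ t
      set A := {t | ε ≤ pol θ t} with hA
      have hAmeas : MeasurableSet A := (isClosed_le continuous_const (hcont θ)).measurableSet
      have step1 : ∫⁻ t in T ∩ A, ENNReal.ofReal (Real.exp (ε*R)) * ENNReal.ofReal (ρ t)
          ≤ ∫⁻ t in T ∩ A, ENNReal.ofReal (Real.exp (pol lam t) * ρ t) := by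
        refine lintegral_mono_ae ?_
        filter_upwards [ae_restrict_mem (hTclosed.measurableSet.inter hAmeas)] with t ht
        rw [ENNReal.ofReal_mul (le_of_lt (Real.exp_pos _))]
        apply _root_.mul_le_mul_left
        apply ENNReal.ofReal_le_ofReal
        apply Real.exp_le_exp.mpr
        rw [hpollam t]
        calc ε * R = R * ε := mul_comm _ _
        _ ≤ R * pol θ t := mul_le_mul_of_nonneg_left ht.2 hR.le
      have step2 : ENNReal.ofReal (Real.exp (ε*R)) * ENNReal.ofReal ε
          ≤ ∫⁻ t in T ∩ A, ENNReal.ofReal (Real.exp (ε*R)) * ENNReal.ofReal (ρ t) := by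
        rw [lintegral_const_mul' _ _ ENNReal.ofReal_ne_top]
        exact _root_.mul_le_mul_right hca _
      have step3 : ∫⁻ t in T ∩ A, ENNReal.ofReal (Real.exp (pol lam t) * ρ t) ≤ J lam := by
        exact lintegral_mono' (Measure.restrict_mono Set.inter_subset_left le_rfl) le_rfl
      have hfinal : ENNReal.ofReal (ε * Real.exp (ε * R)) ≤ J lam := by
        rw [ENNReal.ofReal_mul hε.le, mul_comm]
        exact le_trans step2 (le_trans step1 step3)
      rw [hLag]
      refine ereal_sub_le_of ?_ hfinal ?_
      · positivity
      · have := hgd_le lam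
        rw [← hRdef] at this
        linarith
    · right
      rw [hLag]
      refine ereal_sub_le_of le_rfl (by simp) ?_
      have h1 : gd lam = R * gd θ := by
        conv_lhs => rw [hlamR]
        exact hgd_smul R θ
      have h2 : R * gd θ ≤ R * (-ε) := mul_le_mul_of_nonneg_left hcb hR.le
      rw [h1]
      nlinarith
  -- Step 3: global upper bound
  have hM : ∀ lam : {i // i ∈ I} → ℝ, Lag T I g ρ lam ≤ ((max (G^2/ε^3) 0 : ℝ) : EReal) := by
    intro lam
    by_cases h0 : lam = 0
    · subst h0
      refine (hJ0 0).trans ?_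
      rw [EReal.coe_le_coe_iff]
      have : gd 0 = 0 := by simp [hgd]
      rw [this]
      exact le_max_right _ _
    · rcases bound lam h0 with h | h
      · refine h.trans ?_
        rw [EReal.coe_le_coe_iff]
        have hexp := exp_sq_quarter (mul_nonneg hε.le (norm_nonneg lam))
        have hmax : G^2/ε^3 ≤ max (G^2/ε^3) 0 := le_max_left _ _
        have hε3 : 0 < ε^3 := by positivity
        have hRn : 0 ≤ ‖lam‖ := norm_nonneg lam
        have key2 : G * ‖lam‖ - ε * Real.exp (ε * ‖lam‖) ≤ G^2/ε^3 := by
          have h2 : ε * ((ε * ‖lam‖)^2/4) ≤ ε * Real.exp (ε * ‖lam‖) :=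
            mul_le_mul_of_nonneg_left hexp hε.le
          rw [le_div_iff₀ hε3]
          nlinarith [sq_nonneg (2*G - ε^3*‖lam‖), mul_le_mul_of_nonneg_left h2 hε3.le]
        linarith
      · refine h.trans ?_
        rw [EReal.coe_le_coe_iff]
        have : 0 ≤ ε * ‖lam‖ := mul_nonneg hε.le (norm_nonneg lam)
        have := le_max_right (G^2/ε^3) (0:ℝ)
        linarith
  refine ⟨⟨max (G^2/ε^3) 0, hM⟩, ?_⟩
  -- Step 4: a point of finiteness
  set lam0 : {i // i ∈ I} → ℝ :=
    fun i => if ∃ ι : Fin n, i.1 = (fun m => if m = ι then 2*k else 0) then -1 else 0 with hlam0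
  have hpol0 : ∀ t, pol lam0 t ≤ 0 := by
    intro t
    apply Finset.sum_nonpos
    intro i _
    rw [hlam0]
    dsimp only
    split_ifs with h
    · obtain ⟨ι, hι⟩ := h
      have hmono : monom i.1 t = t ι ^ (2*k) := by
        rw [hι]
        unfold monom
        rw [show (∏ j, t j ^ (if j = ι then 2*k else 0))
            = ∏ j, (if j = ι then t j ^ (2*k) else 1) from
          Finset.prod_congr rfl fun j _ => by split_ifs <;> simp]
        simp
      have : (0:ℝ) ≤ monom i.1 t := by
        rw [hmono]
        exact Even.pow_nonneg (even_two_mul k) _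
      nlinarith
    · simp
  have hJ0fin : J lam0 ≠ ⊤ := by
    have hle : ∀ t, ENNReal.ofReal (Real.exp (pol lam0 t) * ρ t) ≤ ENNReal.ofReal (ρ t) := by
      intro t
      rcases le_or_gt (ρ t) 0 with h | h
      · rw [ENNReal.ofReal_eq_zero.mpr (mul_nonpos_of_nonneg_of_nonpos (Real.exp_pos _).le h)]
        exact zero_le
      · apply ENNReal.ofReal_le_ofReal
        have h1 : Real.exp (pol lam0 t) ≤ 1 := by
          rw [← Real.exp_zero]
          exact Real.exp_le_exp.mpr (hpol0 t)
        nlinarith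
    exact ne_top_of_le_ne_top hμfin.ne (lintegral_mono hle)
  set c0 : ℝ := gd lam0 - (J lam0).toReal with hc0
  have hLag0 : Lag T I g ρ lam0 = ((c0 : ℝ) : EReal) := by
    rw [hLag, ← ENNReal.ofReal_toReal hJ0fin, EReal.coe_ennreal_ofReal,
      sup_eq_left.mpr ENNReal.toReal_nonneg, ← EReal.coe_sub, hc0]
  -- Step 5: attainment
  set S : EReal := ⨆ lam, Lag T I g ρ lam with hSdef
  have hSle : S ≤ ((max (G^2/ε^3) 0 : ℝ) : EReal) := iSup_le hM
  have hSge : ((c0 : ℝ) : EReal) ≤ S := hLag0 ▸ le_iSup _ lam0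
  have hSneT : S ≠ ⊤ := fun h => by
    rw [h] at hSle
    exact absurd (top_le_iff.mp hSle) (EReal.coe_ne_top _)
  have hSneB : S ≠ ⊥ := fun h => by
    rw [h] at hSge
    exact absurd (le_bot_iff.mp hSge) (EReal.coe_ne_bot _)
  set s : ℝ := S.toReal with hsdef
  have hs : S = ((s : ℝ) : EReal) := (EReal.coe_toReal hSneT hSneB).symm
  have hc0s : c0 ≤ s := by
    rw [hs] at hSge
    exact_mod_cast hSge
  set c' : ℝ := ε^3/4 with hc'def
  have hc'pos : 0 < c' := by positivity
  set δ : ℝ := min ε 1 with hδdef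
  have hδpos : 0 < δ := lt_min hε one_pos
  have hδε : δ ≤ ε := min_le_left _ _
  have hδ1 : δ ≤ 1 := min_le_right _ _
  set R0 : ℝ := max ((G+1)/c') (max ((1+|c0|)/δ) 1) with hR0def
  have hout : ∀ lam : {i // i ∈ I} → ℝ, R0 < ‖lam‖ →
      Lag T I g ρ lam ≤ ((c0 - 1 : ℝ) : EReal) := by
    intro lam hR
    have hR1 : (1:ℝ) ≤ ‖lam‖ :=
      le_of_lt (lt_of_le_of_lt (le_max_of_le_right (le_max_right _ _)) hR)
    have hlamne : lam ≠ 0 := by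
      intro h
      rw [h, norm_zero] at hR1
      linarith
    set R := ‖lam‖ with hRdef
    have hRpos : (0:ℝ) < R := by linarith
    have hcR : G + 1 ≤ c' * R := by
      have h1 : (G+1)/c' < R := lt_of_le_of_lt (le_max_left _ _) hR
      rw [div_lt_iff₀ hc'pos] at h1
      rw [mul_comm]
      exact h1.le
    have hδR : 1 + |c0| ≤ δ * R := by
      have h1 : (1+|c0|)/δ < R :=
        lt_of_le_of_lt (le_max_of_le_right (le_max_left _ _)) hR
      rw [div_lt_iff₀ hδpos] at h1
      rw [mul_comm]
      exact h1.le
    have habs : -|c0| ≤ c0 := neg_abs_le c0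
    rcases bound lam hlamne with h | h
    · refine h.trans ?_
      rw [EReal.coe_le_coe_iff]
      have hexp := exp_sq_quarter (mul_nonneg hε.le hRpos.le)
      have h2 : c' * R^2 ≤ ε * Real.exp (ε * R) := by
        have h5 := mul_le_mul_of_nonneg_left hexp hε.le
        calc c' * R^2 = ε * ((ε*R)^2/4) := by rw [hc'def]; ring
        _ ≤ ε * Real.exp (ε * R) := h5
      have h4' : (G+1)*R ≤ c'*R^2 := by
        rw [pow_two, ← mul_assoc]
        exact mul_le_mul_of_nonneg_right hcR hRpos.le
      have hδR' : δ*R ≤ R := by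
        calc δ*R ≤ 1*R := mul_le_mul_of_nonneg_right hδ1 hRpos.le
        _ = R := one_mul R
      linarith [h2, h4', hδR, hδR', habs]
    · refine h.trans ?_
      rw [EReal.coe_le_coe_iff]
      have h6 : δ * R ≤ ε * R := mul_le_mul_of_nonneg_right hδε hRpos.le
      linarith [h6, hδR, habs]
  -- minimizing sequence
  have hseq2 : ∀ j : ℕ, ∃ lam, ((s - 1/((j:ℝ)+1) : ℝ) : EReal) < Lag T I g ρ lam := by
    intro j
    have hlt : ((s - 1/((j:ℝ)+1) : ℝ) : EReal) < S := by
      rw [hs, EReal.coe_lt_coe_iff]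
      have : (0:ℝ) < 1/((j:ℝ)+1) := by positivity
      linarith
    rw [hSdef, lt_iSup_iff] at hlt
    exact hlt
  choose lams hlams using hseq2
  have hball : ∀ j, lams j ∈ Metric.closedBall (0 : {i // i ∈ I} → ℝ) R0 := by
    intro j
    rw [Metric.mem_closedBall, dist_zero_right]
    by_contra hgt
    push_neg at hgt
    have h1 := hout (lams j) hgt
    have h2 := (hlams j).trans_le h1
    rw [EReal.coe_lt_coe_iff] at h2
    have hj : 1/((j:ℝ)+1) ≤ 1 := by
      rw [div_le_one (by positivity)]
      simp [Nat.cast_nonneg]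
    linarith
  obtain ⟨lam', hmem', ψ, hψ, hconv'⟩ :=
    (isCompact_closedBall (0 : {i // i ∈ I} → ℝ) R0).tendsto_subseq hball
  refine ⟨lam', fun lam => ?_⟩
  suffices hS' : ((s:ℝ) : EReal) ≤ Lag T I g ρ lam' by
    have hl : Lag T I g ρ lam ≤ S := le_iSup _ lam
    rw [hs] at hl
    exact hl.trans hS'
  set a : ℕ → ℝ := fun j => gd (lams (ψ j)) with hadef
  have ha : Tendsto a atTop (nhds (gd lam')) := (hgdcont.tendsto lam').comp hconv'
  have hinv2 : Tendsto (fun j : ℕ => 1/((ψ j : ℝ)+1)) atTop (nhds 0) :=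
    tendsto_one_div_add_atTop_nhds_zero_nat.comp hψ.tendsto_atTop
  have hstep : ∀ j : ℕ, J (lams (ψ j)) ≤ ENNReal.ofReal (a j - s + 1/((ψ j:ℝ)+1)) ∧
      s - 1/((ψ j:ℝ)+1) ≤ a j := by
    intro j
    have h2 := hlams (ψ j)
    rcases eq_or_ne (J (lams (ψ j))) ⊤ with htop | hne
    · rw [hLag, htop] at h2
      simp only [EReal.coe_ennreal_top, EReal.sub_top] at h2
      exact absurd h2 (by simp)
    · rw [hLag, ← ENNReal.ofReal_toReal hne, EReal.coe_ennreal_ofReal,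
        sup_eq_left.mpr ENNReal.toReal_nonneg, ← EReal.coe_sub, EReal.coe_lt_coe_iff] at h2
      have htnn : 0 ≤ (J (lams (ψ j))).toReal := ENNReal.toReal_nonneg
      constructor
      · rw [← ENNReal.ofReal_toReal hne]
        exact ENNReal.ofReal_le_ofReal (by linarith)
      · linarith
  have hsle : s ≤ gd lam' := by
    have h1 : Tendsto (fun j => s - 1/((ψ j:ℝ)+1)) atTop (nhds (s - 0)) :=
      tendsto_const_nhds.sub hinv2
    rw [sub_zero] at h1
    exact le_of_tendsto_of_tendsto' h1 ha fun j => (hstep j).2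
  have hFatou : J lam' ≤ liminf (fun j => J (lams (ψ j))) atTop := by
    have hptw : ∀ t, Tendsto (fun j => ENNReal.ofReal (Real.exp (pol (lams (ψ j)) t) * ρ t))
        atTop (nhds (ENNReal.ofReal (Real.exp (pol lam' t) * ρ t))) := by
      intro t
      apply (ENNReal.continuous_ofReal.tendsto _).comp
      exact (((Real.continuous_exp.tendsto _).comp
        (((hcont' t).tendsto lam').comp hconv'))).mul tendsto_const_nhds
    have heq : J lam' = ∫⁻ t in T,
        (liminf (fun j => ENNReal.ofReal (Real.exp (pol (lams (ψ j)) t) * ρ t)) atTop) := by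
      rw [hJ]
      exact lintegral_congr fun t => ((hptw t).liminf_eq).symm
    rw [heq]
    exact lintegral_liminf_le' (fun j => haem _)
  have hlim2 : liminf (fun j => J (lams (ψ j))) atTop ≤ ENNReal.ofReal (gd lam' - s) := by
    calc liminf (fun j => J (lams (ψ j))) atTop
        ≤ liminf (fun j => ENNReal.ofReal (a j - s + 1/((ψ j:ℝ)+1))) atTop :=
        Filter.liminf_le_liminf (Eventually.of_forall fun j => (hstep j).1)
    _ = ENNReal.ofReal (gd lam' - s) := by
        have h7 : Tendsto (fun j => ENNReal.ofReal (a j - s + 1/((ψ j:ℝ)+1))) atTop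
            (nhds (ENNReal.ofReal (gd lam' - s + 0))) :=
          (ENNReal.continuous_ofReal.tendsto _).comp ((ha.sub_const s).add hinv2)
        rw [add_zero] at h7
        exact h7.liminf_eq
  have hJle := hFatou.trans hlim2
  have hJ' : J lam' ≠ ⊤ := ne_top_of_le_ne_top ENNReal.ofReal_ne_top hJle
  rw [hLag]
  apply ereal_le_sub_of hJ'
  have h3 := ENNReal.toReal_mono ENNReal.ofReal_ne_top hJle
  rw [ENNReal.toReal_ofReal (by linarith)] at h3
  linarith
end

section
/- Let T ⊆ ℝ^n be a closed set of positive Lebesgue measure, let I ⊆ ℤ_+^n be a finite set with 0 ∈ I, let g = (g_i)_{i∈I} be real numbers, and fix ρ ∈ L^1(T, dt) with ρ > 0 a.e. on T. If the functional L(λ) = Σ_{i∈I} g_i λ_i − ∫_T e^{Σ_{i∈I} λ_i t^i} ρ(t) dt on ℝ^N (N = card I) is bounded from above and attains its supremum, then the point λ* ∈ ℝ^N at which the supremum is attained is unique. -/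
open MeasureTheory Real ENNReal

section Aux
open MvPolynomial

lemma contCons (n : ℕ) : Continuous fun sy : (Fin n → ℝ) × ℝ => (Fin.cons sy.2 sy.1 : Fin (n+1) → ℝ) := by
  apply continuous_pi
  intro i
  refine Fin.cases ?_ ?_ i
  · simpa using (continuous_snd : Continuous fun sy : (Fin n → ℝ) × ℝ => sy.2)
  · intro j
    simpa using (by fun_prop :
      Continuous fun sy : (Fin n → ℝ) × ℝ => sy.1 j)

lemma poly_zero_set_null : ∀ (n : ℕ) (p : MvPolynomial (Fin n) ℝ), p ≠ 0 →
    volume {x : Fin n → ℝ | MvPolynomial.eval x p = 0} = 0 := by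
  intro n
  induction n with
  | zero =>
    intro p hp
    convert measure_empty (μ := (volume : Measure (Fin 0 → ℝ)))
    rw [Set.eq_empty_iff_forall_notMem]
    intro x hx
    apply hp
    apply MvPolynomial.funext
    intro y
    have : y = x := Subsingleton.elim _ _
    simpa [this] using hx
  | succ n ih =>
    intro p hp
    set q := finSuccEquiv ℝ n p with hq
    have hq0 : q ≠ 0 := by
      simp only [hq, ne_eq, EmbeddingLike.map_eq_zero_iff]; exact hp
    obtain ⟨k, hk⟩ : ∃ k, q.coeff k ≠ 0 := by
      by_contra h
      push_neg at h
      exact hq0 (Polynomial.ext fun k => by simp [h k])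
    set e := MeasurableEquiv.piFinSuccAbove (fun _ : Fin (n+1) => ℝ) 0 with he
    have hmp : MeasurePreserving e volume (volume.prod volume) :=
      measurePreserving_piFinSuccAbove (fun _ => volume) 0
    set Z : Set (Fin (n+1) → ℝ) := {x | MvPolynomial.eval x p = 0} with hZ
    set Z' : Set ((Fin n → ℝ) × ℝ) :=
      {sy | Polynomial.eval sy.2 (Polynomial.map (MvPolynomial.eval sy.1) q) = 0} with hZ'
    have hZ'alt : Z' = {sy : (Fin n → ℝ) × ℝ | MvPolynomial.eval (Fin.cons sy.2 sy.1) p = 0} := by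
      ext sy
      simp only [hZ', Set.mem_setOf_eq, eval_eq_eval_mv_eval', hq]
    have hZ'm : MeasurableSet Z' := by
      rw [hZ'alt]
      exact (isClosed_singleton.preimage
        ((MvPolynomial.continuous_eval p).comp (contCons n))).measurableSet
    have hex : ∀ x : Fin (n+1) → ℝ, (Fin.cons (e x).1 (e x).2 : Fin (n+1) → ℝ) = x := by
      intro x
      calc (Fin.cons (e x).1 (e x).2 : Fin (n+1) → ℝ)
          = Fin.insertNth 0 (e x).1 (e x).2 := (Fin.insertNth_zero' _ _).symm
        _ = e.symm (e x) := rfl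
        _ = x := e.symm_apply_apply x
    have key : Z = e ⁻¹' (Prod.swap ⁻¹' Z') := by
      ext x
      simp only [hZ, hZ'alt, Set.mem_preimage, Set.mem_setOf_eq, Prod.fst_swap, Prod.snd_swap]
      rw [hex x]
    have h1 : volume Z = (volume.prod volume) (Prod.swap ⁻¹' Z') := by
      rw [key]
      exact hmp.measure_preimage (hZ'm.preimage measurable_swap).nullMeasurableSet
    have h2 : (volume.prod volume) (Prod.swap ⁻¹' Z') = (volume.prod volume) Z' :=
      Measure.measurePreserving_swap.measure_preimage hZ'm.nullMeasurableSet
    rw [h1, h2, Measure.measure_prod_null hZ'm]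
    have hN := ih (q.coeff k) hk
    rw [measure_eq_zero_iff_ae_notMem] at hN
    filter_upwards [hN] with s hs
    have hmapne : Polynomial.map (MvPolynomial.eval s) q ≠ 0 := by
      intro h0
      apply hs
      show MvPolynomial.eval s (q.coeff k) = 0
      have := congrArg (fun r => Polynomial.coeff r k) h0
      simpa [Polynomial.coeff_map] using this
    have : (Prod.mk s ⁻¹' Z') = {y | Polynomial.IsRoot (Polynomial.map (MvPolynomial.eval s) q) y} := by
      ext y; simp [hZ', Polynomial.IsRoot]
    show volume (Prod.mk s ⁻¹' Z') = 0
    rw [this]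
    exact Set.Finite.measure_zero (Polynomial.finite_setOf_isRoot hmapne) volume

lemma monom_ae_zero {n : ℕ} (T : Set (Fin n → ℝ)) (hTm : MeasurableSet T)
    (hTpos : 0 < volume T) (I : Finset (Fin n → ℕ)) (d : {i // i ∈ I} → ℝ)
    (h : ∀ᵐ t ∂(volume.restrict T), ∑ i ∈ I.attach, d i * monom i.1 t = 0) :
    ∀ i, d i = 0 := by
  classical
  set P : MvPolynomial (Fin n) ℝ :=
    ∑ i ∈ I.attach, MvPolynomial.monomial (Finsupp.equivFunOnFinite.symm i.1) (d i) with hP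
  have heval : ∀ t : Fin n → ℝ, MvPolynomial.eval t P = ∑ i ∈ I.attach, d i * monom i.1 t := by
    intro t
    rw [hP, map_sum]
    refine Finset.sum_congr rfl fun i _ => ?_
    rw [MvPolynomial.eval_monomial, monom]
    rw [Finsupp.prod_pow]
    simp
  have hP0 : P = 0 := by
    by_contra hPne
    have hZ := poly_zero_set_null n P hPne
    have hae : ∀ᵐ t ∂(volume.restrict T), MvPolynomial.eval t P = 0 := by
      filter_upwards [h] with t ht
      rw [heval t]; exact ht
    have hnull : volume ({t | ¬ MvPolynomial.eval t P = 0} ∩ T) = 0 := by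
      have := ae_iff.mp hae
      rwa [Measure.restrict_apply' hTm] at this
    have hsub : T ⊆ ({t | ¬ MvPolynomial.eval t P = 0} ∩ T) ∪ {t | MvPolynomial.eval t P = 0} := by
      intro t ht
      by_cases hc : MvPolynomial.eval t P = 0
      · exact Or.inr hc
      · exact Or.inl ⟨hc, ht⟩
    have : volume T ≤ 0 := by
      calc volume T ≤ volume (({t | ¬ MvPolynomial.eval t P = 0} ∩ T)
            ∪ {t | MvPolynomial.eval t P = 0}) := measure_mono hsub
        _ ≤ volume ({t | ¬ MvPolynomial.eval t P = 0} ∩ T)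
            + volume {t | MvPolynomial.eval t P = 0} := measure_union_le _ _
        _ = 0 := by rw [hnull, hZ, add_zero]
    exact absurd (le_antisymm this zero_le) (ne_of_gt hTpos)
  intro i
  have hcoeff : P.coeff (Finsupp.equivFunOnFinite.symm i.1) = d i := by
    rw [hP, MvPolynomial.coeff_sum]
    rw [Finset.sum_eq_single i]
    · rw [MvPolynomial.coeff_monomial, if_pos rfl]
    · intro j _ hne
      rw [MvPolynomial.coeff_monomial, if_neg]
      intro hEq
      exact hne (Subtype.ext (Finsupp.equivFunOnFinite.symm.injective hEq))
    · intro hi; exact absurd (Finset.mem_attach _ _) hi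
  rw [← hcoeff, hP0, MvPolynomial.coeff_zero]

lemma ereal_sub_eq (a : ℝ) (b : ℝ≥0∞) (hb : b ≠ ⊤) :
    (a : EReal) - (b : EReal) = ((a - b.toReal : ℝ) : EReal) := by
  have hbe : ((b : EReal)) = ((b.toReal : ℝ) : EReal) := by
    rw [← EReal.coe_toReal (x := (b : EReal))
      (by rwa [ne_eq, EReal.coe_ennreal_eq_top_iff]) (EReal.coe_ennreal_ne_bot b),
      EReal.toReal_coe_ennreal]
  rw [hbe, ← EReal.coe_sub]


end Aux

/-- If the Lagrangian `L` is bounded from above and attains its supremum,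
then the point at which the supremum is attained is unique. -/
theorem stmt_4 {n : ℕ}
    (T : Set (Fin n → ℝ)) (hTclosed : IsClosed T) (hTpos : 0 < volume T)
    (I : Finset (Fin n → ℕ)) (hI0 : (0 : Fin n → ℕ) ∈ I)
    (g : (Fin n → ℕ) → ℝ)
    (ρ : (Fin n → ℝ) → ℝ) (hρint : Integrable ρ (volume.restrict T))
    (hρpos : ∀ᵐ t ∂(volume.restrict T), 0 < ρ t)
    (hbdd : ∃ M : ℝ, ∀ lam : {i // i ∈ I} → ℝ, Lag T I g ρ lam ≤ (M : EReal)) :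
    ∀ lam₁ lam₂ : {i // i ∈ I} → ℝ,
      (∀ lam : {i // i ∈ I} → ℝ, Lag T I g ρ lam ≤ Lag T I g ρ lam₁) →
      (∀ lam : {i // i ∈ I} → ℝ, Lag T I g ρ lam ≤ Lag T I g ρ lam₂) →
      lam₁ = lam₂ := by
  intro lam₁ lam₂ h₁ h₂
  set μ := volume.restrict T with hμ
  -- notation
  set S : ({i // i ∈ I} → ℝ) → (Fin n → ℝ) → ℝ :=
    fun lam t => ∑ i ∈ I.attach, lam i * monom i.1 t with hSdef
  set F : ({i // i ∈ I} → ℝ) → ℝ≥0∞ :=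
    fun lam => ∫⁻ t in T, ENNReal.ofReal (Real.exp (S lam t) * ρ t) with hFdef
  set A : ({i // i ∈ I} → ℝ) → ℝ := fun lam => ∑ i ∈ I.attach, g i.1 * lam i with hAdef
  have hLag : ∀ lam, Lag T I g ρ lam = ((A lam : ℝ) : EReal) - ((F lam : ℝ≥0∞) : EReal) := by
    intro lam; rfl
  -- continuity / measurability
  have hScont : ∀ lam, Continuous fun t => S lam t := by
    intro lam
    exact continuous_finset_sum _ fun i _ => continuous_const.mul
      (continuous_finset_prod _ fun j _ => (continuous_apply j).pow _)
  have hmeas : ∀ lam, AEMeasurable (fun t => ENNReal.ofReal (Real.exp (S lam t) * ρ t)) μ := by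
    intro lam
    exact ENNReal.measurable_ofReal.comp_aemeasurable
      (((Real.continuous_exp.comp (hScont lam)).aemeasurable).mul hρint.1.aemeasurable)
  -- F 0 is finite
  have hF0 : F 0 ≠ ⊤ := by
    have hle : F 0 ≤ ∫⁻ t in T, (‖ρ t‖₊ : ℝ≥0∞) := by
      refine lintegral_mono fun t => ?_
      have : S 0 t = 0 := by simp [hSdef]
      rw [this, Real.exp_zero, one_mul]
      exact Real.ofReal_le_enorm (ρ t)
    exact ne_top_of_le_ne_top hρint.2.ne hle
  have hLag0 : Lag T I g ρ 0 = ((A 0 - (F 0).toReal : ℝ) : EReal) := by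
    rw [hLag, ereal_sub_eq _ _ hF0]
  -- finiteness of F lam for maximizers
  have hFfin : ∀ lam' : {i // i ∈ I} → ℝ, (∀ lam, Lag T I g ρ lam ≤ Lag T I g ρ lam') →
      F lam' ≠ ⊤ := by
    intro lam' hmax htop
    have hbot : Lag T I g ρ lam' = ⊥ := by
      rw [hLag, htop, EReal.coe_ennreal_top, EReal.sub_top]
    have := hmax 0
    rw [hbot, le_bot_iff, hLag0] at this
    exact EReal.coe_ne_bot _ this
  have hF1 : F lam₁ ≠ ⊤ := hFfin lam₁ h₁
  have hF2 : F lam₂ ≠ ⊤ := hFfin lam₂ h₂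
  -- midpoint
  set m : {i // i ∈ I} → ℝ := fun i => (lam₁ i + lam₂ i) / 2 with hm
  have hSm : ∀ t, S m t = (S lam₁ t + S lam₂ t) / 2 := by
    intro t
    rw [hSdef]
    simp only
    rw [add_div, Finset.sum_div, Finset.sum_div, ← Finset.sum_add_distrib]
    exact Finset.sum_congr rfl fun i _ => by rw [hm]; ring
  have hAm : A m = (A lam₁ + A lam₂) / 2 := by
    rw [hAdef]
    simp only
    rw [add_div, Finset.sum_div, Finset.sum_div, ← Finset.sum_add_distrib]
    exact Finset.sum_congr rfl fun i _ => by rw [hm]; ring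
  -- pointwise convexity
  have hconv : ∀ t, Real.exp (S m t) ≤ (Real.exp (S lam₁ t) + Real.exp (S lam₂ t)) / 2 := by
    intro t
    rw [hSm t]
    have := convexOn_exp.2 (Set.mem_univ (S lam₁ t)) (Set.mem_univ (S lam₂ t))
      (by norm_num : (0:ℝ) ≤ 1/2) (by norm_num : (0:ℝ) ≤ 1/2) (by norm_num)
    simp only [smul_eq_mul] at this
    calc Real.exp ((S lam₁ t + S lam₂ t) / 2)
        = Real.exp (1/2 * S lam₁ t + 1/2 * S lam₂ t) := by ring_nf
      _ ≤ 1/2 * Real.exp (S lam₁ t) + 1/2 * Real.exp (S lam₂ t) := this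
      _ = (Real.exp (S lam₁ t) + Real.exp (S lam₂ t)) / 2 := by ring
  -- the comparison function
  set G : (Fin n → ℝ) → ℝ≥0∞ := fun t =>
    (ENNReal.ofReal (Real.exp (S lam₁ t) * ρ t) + ENNReal.ofReal (Real.exp (S lam₂ t) * ρ t))
      * 2⁻¹ with hG
  have hGmeas : AEMeasurable G μ := (((hmeas lam₁).add (hmeas lam₂)).mul_const _)
  have hGint : ∫⁻ t, G t ∂μ = (F lam₁ + F lam₂) * 2⁻¹ := by
    rw [hG]
    rw [lintegral_mul_const' _ _ (by simp)]
    rw [lintegral_add_left' (hmeas lam₁)]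
  have hGtop : (F lam₁ + F lam₂) * 2⁻¹ ≠ ⊤ := by
    refine ENNReal.mul_ne_top (ENNReal.add_ne_top.mpr ⟨hF1, hF2⟩) (by simp)
  -- a.e. pointwise bound
  have hGalt : ∀ᵐ t ∂μ, G t = ENNReal.ofReal
      ((Real.exp (S lam₁ t) * ρ t + Real.exp (S lam₂ t) * ρ t) / 2) := by
    filter_upwards [hρpos] with t ht
    rw [hG]
    have h1 : 0 ≤ Real.exp (S lam₁ t) * ρ t := le_of_lt (mul_pos (Real.exp_pos _) ht)
    have h2 : 0 ≤ Real.exp (S lam₂ t) * ρ t := le_of_lt (mul_pos (Real.exp_pos _) ht)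
    rw [ENNReal.ofReal_div_of_pos (by norm_num), ENNReal.ofReal_add h1 h2]
    simp [div_eq_mul_inv, ENNReal.ofReal_ofNat]
  have hptle : (fun t => ENNReal.ofReal (Real.exp (S m t) * ρ t)) ≤ᵐ[μ] G := by
    filter_upwards [hρpos, hGalt] with t ht hGt
    rw [hGt]
    refine ENNReal.ofReal_le_ofReal ?_
    have := mul_le_mul_of_nonneg_right (hconv t) (le_of_lt ht)
    calc Real.exp (S m t) * ρ t
        ≤ (Real.exp (S lam₁ t) + Real.exp (S lam₂ t)) / 2 * ρ t := this
      _ = (Real.exp (S lam₁ t) * ρ t + Real.exp (S lam₂ t) * ρ t) / 2 := by ring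
  have hFm_int : ∫⁻ t, ENNReal.ofReal (Real.exp (S m t) * ρ t) ∂μ = F m := rfl
  have hFm_le : F m ≤ (F lam₁ + F lam₂) * 2⁻¹ := by
    rw [← hGint, ← hFm_int]
    exact lintegral_mono_ae hptle
  have hFm : F m ≠ ⊤ := ne_top_of_le_ne_top hGtop hFm_le
  -- real-valued quantities
  set r₁ := (F lam₁).toReal with hr₁
  set r₂ := (F lam₂).toReal with hr₂
  set rm := (F m).toReal with hrm
  have hLag1 : Lag T I g ρ lam₁ = ((A lam₁ - r₁ : ℝ) : EReal) := by
    rw [hLag, ereal_sub_eq _ _ hF1]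
  have hLag2 : Lag T I g ρ lam₂ = ((A lam₂ - r₂ : ℝ) : EReal) := by
    rw [hLag, ereal_sub_eq _ _ hF2]
  have hLagm : Lag T I g ρ m = ((A m - rm : ℝ) : EReal) := by
    rw [hLag, ereal_sub_eq _ _ hFm]
  have hEq : A lam₁ - r₁ = A lam₂ - r₂ := by
    have ha := h₁ lam₂
    have hb := h₂ lam₁
    rw [hLag1, hLag2] at ha hb
    exact le_antisymm (EReal.coe_le_coe_iff.mp hb) (EReal.coe_le_coe_iff.mp ha)
  have hmle : A m - rm ≤ A lam₁ - r₁ := by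
    have := h₁ m
    rw [hLag1, hLagm] at this
    exact EReal.coe_le_coe_iff.mp this
  have hrm_ge : (r₁ + r₂) / 2 ≤ rm := by
    rw [hAm] at hmle
    linarith [hEq, hmle]
  -- deduce reverse integral inequality
  have hrev : (F lam₁ + F lam₂) * 2⁻¹ ≤ F m := by
    rw [← ENNReal.toReal_le_toReal hGtop hFm]
    have : ((F lam₁ + F lam₂) * 2⁻¹).toReal = (r₁ + r₂) / 2 := by
      rw [ENNReal.toReal_mul, ENNReal.toReal_add hF1 hF2]
      simp [div_eq_mul_inv]
      rfl
    rw [this]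
    exact hrm_ge
  -- equality a.e.
  have haeeq : (fun t => ENNReal.ofReal (Real.exp (S m t) * ρ t)) =ᵐ[μ] G := by
    refine ae_eq_of_ae_le_of_lintegral_le hptle ?_ hGmeas ?_
    · rw [hFm_int]; exact hFm
    · rw [hGint, hFm_int]; exact hrev
  -- deduce S lam₁ = S lam₂ a.e.
  have hSeq : ∀ᵐ t ∂μ, S lam₁ t = S lam₂ t := by
    filter_upwards [hρpos, haeeq, hGalt] with t ht heqt hGt
    by_contra hne
    have hstrict : Real.exp (S m t) < (Real.exp (S lam₁ t) + Real.exp (S lam₂ t)) / 2 := by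
      rw [hSm t]
      have := strictConvexOn_exp.2 (Set.mem_univ (S lam₁ t)) (Set.mem_univ (S lam₂ t)) hne
        (by norm_num : (0:ℝ) < 1/2) (by norm_num : (0:ℝ) < 1/2) (by norm_num)
      simp only [smul_eq_mul] at this
      calc Real.exp ((S lam₁ t + S lam₂ t) / 2)
          = Real.exp (1/2 * S lam₁ t + 1/2 * S lam₂ t) := by ring_nf
        _ < 1/2 * Real.exp (S lam₁ t) + 1/2 * Real.exp (S lam₂ t) := this
        _ = (Real.exp (S lam₁ t) + Real.exp (S lam₂ t)) / 2 := by ring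
    have hlt : Real.exp (S m t) * ρ t
        < (Real.exp (S lam₁ t) * ρ t + Real.exp (S lam₂ t) * ρ t) / 2 := by
      have := mul_lt_mul_of_pos_right hstrict ht
      calc Real.exp (S m t) * ρ t
          < (Real.exp (S lam₁ t) + Real.exp (S lam₂ t)) / 2 * ρ t := this
        _ = (Real.exp (S lam₁ t) * ρ t + Real.exp (S lam₂ t) * ρ t) / 2 := by ring
    have hpos2 : 0 < (Real.exp (S lam₁ t) * ρ t + Real.exp (S lam₂ t) * ρ t) / 2 := by
      positivity
    have : ENNReal.ofReal (Real.exp (S m t) * ρ t)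
        < ENNReal.ofReal ((Real.exp (S lam₁ t) * ρ t + Real.exp (S lam₂ t) * ρ t) / 2) :=
      (ENNReal.ofReal_lt_ofReal_iff hpos2).mpr hlt
    rw [← hGt, heqt] at this
    exact lt_irrefl _ this
  -- conclude via linear independence of monomials
  have hdiff : ∀ᵐ t ∂μ, ∑ i ∈ I.attach, (lam₁ i - lam₂ i) * monom i.1 t = 0 := by
    filter_upwards [hSeq] with t ht
    have : ∑ i ∈ I.attach, (lam₁ i - lam₂ i) * monom i.1 t = S lam₁ t - S lam₂ t := by
      rw [hSdef]
      simp only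
      rw [← Finset.sum_sub_distrib]
      exact Finset.sum_congr rfl fun i _ => by ring
    rw [this, ht, sub_self]
  have hzero := monom_ae_zero T hTclosed.measurableSet hTpos I (fun i => lam₁ i - lam₂ i) hdiff
  funext i
  exact sub_eq_zero.mp (hzero i)
end

section
/- Let T ⊆ ℝ^n be a measurable set, let μ be a finite Borel measure on T such that ∫_T |t^i| dμ(t) < ∞ for every i in a finite set I ⊆ ℤ_+^n with 0 ∈ I, and let g = (g_i)_{i∈I} be real numbers. Suppose f_0 ∈ L^∞(T, μ), f_0 ≥ 0 a.e., satisfies ∫_T t^i f_0(t) dμ(t) = g_i for all i ∈ I. Then for every λ = (λ_i)_{i∈I} ∈ ℝ^N one has Σ_{i∈I} g_i λ_i − ∫_T e^{Σ_{i∈I} λ_i t^i} dμ(t) ≤ ∫_T f_0 ln f_0 dμ − ∫_T f_0 dμ; in particular sup_λ [Σ_{i∈I} g_i λ_i − ∫_T e^{Σ_{i∈I} λ_i t^i} dμ(t)] < ∞. -/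
open MeasureTheory Real ENNReal

lemma young_aux (x y : ℝ) (hx : 0 ≤ x) : x * y ≤ x * Real.log x - x + Real.exp y := by
  rcases eq_or_lt_of_le hx with h | h
  · simp [← h]; positivity
  · have h1 : (y - Real.log x) + 1 ≤ Real.exp (y - Real.log x) := Real.add_one_le_exp _
    have h2 : x * ((y - Real.log x) + 1) ≤ x * Real.exp (y - Real.log x) :=
      mul_le_mul_of_nonneg_left h1 hx
    rw [Real.exp_sub, Real.exp_log h] at h2
    have : x * (Real.exp y / x) = Real.exp y := by field_simp
    nlinarith [this]

lemma xlogx_bound (C x : ℝ) (hx : 0 ≤ x) (hxC : x ≤ C) :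
    |x * Real.log x| ≤ 1 + C * |Real.log C| := by
  rcases le_or_gt x 1 with h1 | h1
  · have hb : -(x * Real.log x) ≤ 1 := by
      rcases eq_or_lt_of_le hx with h | h
      · simp [← h]
      · have := Real.log_le_sub_one_of_pos (x := 1/x) (by positivity)
        rw [Real.log_div one_ne_zero (ne_of_gt h), Real.log_one] at this
        have h2 := mul_le_mul_of_nonneg_left this hx
        have h3 : x * (1/x) = 1 := by field_simp
        nlinarith
    have hnn : x * Real.log x ≤ 0 :=
      mul_nonpos_of_nonneg_of_nonpos hx (Real.log_nonpos hx h1)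
    have hC : 0 ≤ C * |Real.log C| := mul_nonneg (le_trans hx hxC) (abs_nonneg _)
    rw [abs_of_nonpos hnn]; linarith
  · have hlx : 0 ≤ Real.log x := Real.log_nonneg h1.le
    have hlC : Real.log x ≤ Real.log C := Real.log_le_log (by linarith) hxC
    have : x * Real.log x ≤ C * |Real.log C| := by
      calc x * Real.log x ≤ C * Real.log C := by nlinarith
        _ ≤ C * |Real.log C| := by
            have := le_abs_self (Real.log C); nlinarith
    rw [abs_of_nonneg (mul_nonneg (by linarith) hlx)]; linarith


lemma monom_continuous {n : ℕ} (i : Fin n → ℕ) : Continuous (monom i) :=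
  continuous_finset_prod _ fun j _ => (continuous_apply j).pow _

/-- Fenchel's inequality argument: if `f₀ ∈ L^∞(T,μ)`, `f₀ ≥ 0` a.e., is a solution of the
moment problem `∫_T t^i f₀ dμ = g_i` (`i ∈ I`) for a finite measure `μ` with finite moments
of all orders `i ∈ I`, then for every `λ ∈ ℝ^N`,
`∑ g_i λ_i − ∫_T e^{∑ λ_i t^i} dμ ≤ ∫_T f₀ ln f₀ dμ − ∫_T f₀ dμ`; in particular the
left-hand side is bounded above over `λ`. -/
theorem stmt_5 {n : ℕ} (T : Set (Fin n → ℝ)) (hT : MeasurableSet T)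
    (μ : Measure (Fin n → ℝ)) [IsFiniteMeasure μ]
    (I : Finset (Fin n → ℕ)) (hI0 : (0 : Fin n → ℕ) ∈ I)
    (hmom : ∀ i ∈ I, Integrable (fun t => monom i t) (μ.restrict T))
    (g : (Fin n → ℕ) → ℝ)
    (f₀ : (Fin n → ℝ) → ℝ) (hf₀bdd : MemLp f₀ ⊤ (μ.restrict T))
    (hf₀0 : ∀ᵐ t ∂(μ.restrict T), 0 ≤ f₀ t)
    (hf₀g : ∀ i ∈ I, ∫ t in T, monom i t * f₀ t ∂μ = g i) :
    (∀ lam : {i // i ∈ I} → ℝ,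
      ((∑ i ∈ I.attach, g i.1 * lam i : ℝ) : EReal)
          - ((∫⁻ t in T, ENNReal.ofReal (Real.exp (∑ i ∈ I.attach, lam i * monom i.1 t)) ∂μ) : EReal)
        ≤ ((∫ t in T, f₀ t * Real.log (f₀ t) ∂μ - ∫ t in T, f₀ t ∂μ : ℝ) : EReal)) ∧
    ∃ M : ℝ, ∀ lam : {i // i ∈ I} → ℝ,
      ((∑ i ∈ I.attach, g i.1 * lam i : ℝ) : EReal)
          - ((∫⁻ t in T, ENNReal.ofReal (Real.exp (∑ i ∈ I.attach, lam i * monom i.1 t)) ∂μ) : EReal)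
        ≤ (M : EReal) := by
  set ν := μ.restrict T with hν
  set C : ℝ := (eLpNormEssSup f₀ ν).toReal with hC
  have hCb : ∀ᵐ t ∂ν, ‖f₀ t‖ ≤ C := by
    filter_upwards [ae_le_eLpNormEssSup (f := f₀) (μ := ν)] with t ht
    have h2 : eLpNormEssSup f₀ ν ≠ ⊤ := by
      have := hf₀bdd.2; rw [eLpNorm_exponent_top] at this; exact this.ne
    calc ‖f₀ t‖ = ((‖f₀ t‖₊ : ℝ≥0∞)).toReal := by simp
      _ ≤ C := ENNReal.toReal_mono h2 ht
  have hmf : AEStronglyMeasurable f₀ ν := hf₀bdd.1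
  have hint_f : Integrable f₀ ν := (integrable_const C).mono' hmf hCb
  have hmlog : AEStronglyMeasurable (fun t => f₀ t * Real.log (f₀ t)) ν :=
    (hmf.aemeasurable.mul
      (Real.measurable_log.comp_aemeasurable hmf.aemeasurable)).aestronglyMeasurable
  have hint_flog : Integrable (fun t => f₀ t * Real.log (f₀ t)) ν := by
    refine (integrable_const (1 + C * |Real.log C|)).mono' hmlog ?_
    filter_upwards [hCb, hf₀0] with t ht ht0
    rw [Real.norm_eq_abs]
    exact xlogx_bound C (f₀ t) ht0 (by rwa [Real.norm_eq_abs, abs_of_nonneg ht0] at ht)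
  have hint_mf : ∀ i ∈ I, Integrable (fun t => monom i t * f₀ t) ν := by
    intro i hi
    have h := (hmom i hi).bdd_mul hmf hCb
    simpa [mul_comm] using h
  have hmain : ∀ lam : {i // i ∈ I} → ℝ,
      ((∑ i ∈ I.attach, g i.1 * lam i : ℝ) : EReal)
          - ((∫⁻ t in T, ENNReal.ofReal (Real.exp (∑ i ∈ I.attach, lam i * monom i.1 t)) ∂μ) : EReal)
        ≤ ((∫ t in T, f₀ t * Real.log (f₀ t) ∂μ - ∫ t in T, f₀ t ∂μ : ℝ) : EReal) := by
    intro lam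
    set S : (Fin n → ℝ) → ℝ := fun t => ∑ i ∈ I.attach, lam i * monom i.1 t with hS
    have hScont : Continuous S :=
      continuous_finset_sum _ fun i _ => continuous_const.mul (monom_continuous i.1)
    have hSint : Integrable S ν :=
      integrable_finset_sum _ fun i _ => ((hmom i.1 i.2).const_mul _)
    have hint_fS : Integrable (fun t => f₀ t * S t) ν := hSint.bdd_mul hmf hCb
    have hsum : (∑ i ∈ I.attach, g i.1 * lam i) = ∫ t, f₀ t * S t ∂ν := by
      have h1 : ∀ i ∈ I.attach, Integrable (fun t => lam i * (monom i.1 t * f₀ t)) ν :=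
        fun i _ => ((hint_mf i.1 i.2).const_mul (lam i))
      calc ∑ i ∈ I.attach, g i.1 * lam i
          = ∑ i ∈ I.attach, ∫ t, lam i * (monom i.1 t * f₀ t) ∂ν := by
            refine Finset.sum_congr rfl fun i _ => ?_
            rw [integral_const_mul, ← hf₀g i.1 i.2]; ring
        _ = ∫ t, ∑ i ∈ I.attach, lam i * (monom i.1 t * f₀ t) ∂ν :=
            (integral_finset_sum _ h1).symm
        _ = ∫ t, f₀ t * S t ∂ν := by
            refine integral_congr_ae (Filter.Eventually.of_forall fun t => ?_)
            simp only [hS, Finset.mul_sum]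
            exact Finset.sum_congr rfl fun i _ => by ring
    set L : ℝ≥0∞ := ∫⁻ t, ENNReal.ofReal (Real.exp (S t)) ∂ν with hL
    show ((∑ i ∈ I.attach, g i.1 * lam i : ℝ) : EReal) - (L : EReal)
        ≤ ((∫ t, f₀ t * Real.log (f₀ t) ∂ν - ∫ t, f₀ t ∂ν : ℝ) : EReal)
    rcases eq_or_ne L ⊤ with hLtop | hLtop
    · rw [hLtop]
      simp only [EReal.coe_ennreal_top, EReal.sub_top]
      exact bot_le
    · have hexp_int : Integrable (fun t => Real.exp (S t)) ν := by
        have h := integrable_toReal_of_lintegral_ne_top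
          (f := fun t => ENNReal.ofReal (Real.exp (S t)))
          (((ENNReal.measurable_ofReal).comp
            (Real.continuous_exp.comp hScont).measurable).aemeasurable) hLtop
        refine h.congr (Filter.Eventually.of_forall fun t => ?_)
        simp only []
        rw [ENNReal.toReal_ofReal (Real.exp_nonneg _)]
      have hLeq : L = ENNReal.ofReal (∫ t, Real.exp (S t) ∂ν) :=
        (ofReal_integral_eq_lintegral_ofReal hexp_int
          (Filter.Eventually.of_forall fun t => Real.exp_nonneg _)).symm
      have hreal : ∑ i ∈ I.attach, g i.1 * lam i - ∫ t, Real.exp (S t) ∂ν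
          ≤ ∫ t, f₀ t * Real.log (f₀ t) ∂ν - ∫ t, f₀ t ∂ν := by
        have hisub : Integrable (fun t => f₀ t * Real.log (f₀ t) - f₀ t) ν :=
          hint_flog.sub hint_f
        have hmono : ∫ t, f₀ t * S t ∂ν
            ≤ ∫ t, (f₀ t * Real.log (f₀ t) - f₀ t + Real.exp (S t)) ∂ν := by
          refine integral_mono_ae hint_fS (hisub.add hexp_int) ?_
          filter_upwards [hf₀0] with t ht0
          exact young_aux _ _ ht0
        have hadd : ∫ t, (f₀ t * Real.log (f₀ t) - f₀ t + Real.exp (S t)) ∂ν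
            = (∫ t, (f₀ t * Real.log (f₀ t) - f₀ t) ∂ν) + ∫ t, Real.exp (S t) ∂ν :=
          integral_add hisub hexp_int
        have hsub : ∫ t, (f₀ t * Real.log (f₀ t) - f₀ t) ∂ν
            = (∫ t, f₀ t * Real.log (f₀ t) ∂ν) - ∫ t, f₀ t ∂ν :=
          integral_sub hint_flog hint_f
        rw [hadd, hsub] at hmono
        rw [hsum]; linarith
      rw [hLeq, EReal.coe_ennreal_ofReal,
        max_eq_left (integral_nonneg fun t => Real.exp_nonneg _), ← EReal.coe_sub]
      exact_mod_cast hreal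
  exact ⟨hmain, ⟨_, hmain⟩⟩
end

section
/- Let T ⊆ ℝ^n be a closed set of positive Lebesgue measure, let I ⊆ ℤ_+^n be a finite set with 0 ∈ I, let g = (g_i)_{i∈I} be real numbers with g_0 = 1, and fix ρ ∈ L^1(T, dt) with ρ > 0 a.e. on T. Suppose the functional L(λ) = Σ_{i∈I} g_i λ_i − ∫_T e^{Σ_{i∈I} λ_i t^i} ρ(t) dt on ℝ^N (N = card I) is bounded from above and attains its supremum at λ* ∈ ℝ^N. Then for every λ = (λ_i)_{i∈I} ∈ ℝ^N with λ ≠ 0 such that Σ_{i∈I} λ_i t^i ≤ 0 for all t ∈ T, one has the strict inequality Σ_{i∈I} g_i λ_i < 0. -/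
open MeasureTheory Real ENNReal

lemma mvpoly_zero_null : ∀ {n : ℕ} (P : MvPolynomial (Fin n) ℝ), P ≠ 0 →
    volume {x : Fin n → ℝ | MvPolynomial.eval x P = 0} = 0 := by
  intro n
  induction n with
  | zero =>
    intro P hP
    obtain ⟨a, rfl⟩ := MvPolynomial.C_surjective (Fin 0) P
    have ha : a ≠ 0 := fun h => hP (by simp [h])
    rw [show {x : Fin 0 → ℝ | MvPolynomial.eval x (MvPolynomial.C a) = 0} = ∅ from by ext x; simp [ha]]
    simp
  | succ n IH =>
    intro P hP
    set Q := MvPolynomial.finSuccEquiv ℝ n P with hQdef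
    have hQ : Q ≠ 0 := by
      intro h0
      apply hP
      apply (MvPolynomial.finSuccEquiv ℝ n).injective
      rw [map_zero]
      exact hQdef ▸ h0
    have hZmeas : MeasurableSet {x : Fin (n+1) → ℝ | MvPolynomial.eval x P = 0} :=
      ((isClosed_singleton.preimage (MvPolynomial.continuous_eval P))).measurableSet
    set e := MeasurableEquiv.piFinSuccAbove (fun _ : Fin (n+1) => ℝ) 0 with he
    have mp := (volume_preserving_piFinSuccAbove (fun _ : Fin (n+1) => ℝ) 0).symm
    rw [← mp.measure_preimage hZmeas.nullMeasurableSet]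
    have hSm : MeasurableSet (e.symm ⁻¹' {x : Fin (n+1) → ℝ | MvPolynomial.eval x P = 0}) :=
      e.symm.measurable hZmeas
    rw [Measure.volume_eq_prod, Measure.measure_prod_null hSm]
    have hroots : Set.Finite {y : ℝ | Polynomial.eval (MvPolynomial.C y) Q = 0} := by
      have hfin : Set.Finite {r : MvPolynomial (Fin n) ℝ | Polynomial.IsRoot Q r} :=
        Polynomial.finite_setOf_isRoot hQ
      have : {y : ℝ | Polynomial.eval (MvPolynomial.C y) Q = 0} =
          (fun y : ℝ => (MvPolynomial.C y : MvPolynomial (Fin n) ℝ)) ⁻¹'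
            {r | Polynomial.IsRoot Q r} := rfl
      rw [this]
      exact Set.Finite.preimage (Set.injOn_of_injective (MvPolynomial.C_injective _ _)) hfin
    have hae : ∀ᵐ y : ℝ, Polynomial.eval (MvPolynomial.C y) Q ≠ 0 := by
      have := hroots.measure_zero (volume : Measure ℝ)
      rw [← compl_mem_ae_iff] at this
      filter_upwards [this] with y hy using hy
    filter_upwards [hae] with y hy
    have hsec : (Prod.mk y ⁻¹' (e.symm ⁻¹' {x : Fin (n+1) → ℝ | MvPolynomial.eval x P = 0}))
        = {s : Fin n → ℝ | MvPolynomial.eval s (Polynomial.eval (MvPolynomial.C y) Q) = 0} := by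
      ext s
      simp only [Set.mem_preimage, Set.mem_setOf_eq]
      have he1 : e.symm (y, s) = Fin.cons y s := by
        simp [he, MeasurableEquiv.piFinSuccAbove, Fin.insertNthEquiv, Fin.insertNth_zero']
      rw [he1, MvPolynomial.eval_eq_eval_mv_eval']
      have key : (MvPolynomial.eval s) (Polynomial.eval (MvPolynomial.C y) Q)
          = Polynomial.eval y (Polynomial.map (MvPolynomial.eval s) Q) := by
        rw [Polynomial.eval_map,
          show Polynomial.eval (MvPolynomial.C y) Q
            = Polynomial.eval₂ (RingHom.id _) (MvPolynomial.C y) Q from rfl,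
          Polynomial.hom_eval₂]
        simp
      rw [← hQdef, key]
    rw [hsec]
    exact IH _ hy

lemma hcoeE : ∀ x : ℝ≥0∞, x ≠ ⊤ → (x : EReal) = ((x.toReal : ℝ) : EReal) := by
  intro x hx
  have h1 : (x : EReal) ≠ ⊤ := by simp [EReal.coe_ennreal_eq_top_iff, hx]
  have h2 : (x : EReal) ≠ ⊥ := EReal.coe_ennreal_ne_bot x
  rw [← EReal.coe_toReal h1 h2, EReal.toReal_coe_ennreal]

/-- If the Lagrangian `L` is bounded above and attains its supremum at `λ*`, then the Riesz
functional of `g` is strictly negative on every nonzero polynomial `∑_{i∈I} λ_i X^i` that is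
nonpositive on `T`. -/
theorem stmt_9 {n : ℕ}
    (T : Set (Fin n → ℝ)) (hTclosed : IsClosed T) (hTpos : 0 < volume T)
    (I : Finset (Fin n → ℕ)) (hI0 : (0 : Fin n → ℕ) ∈ I)
    (g : (Fin n → ℕ) → ℝ) (hg0 : g 0 = 1)
    (ρ : (Fin n → ℝ) → ℝ) (hρint : Integrable ρ (volume.restrict T))
    (hρpos : ∀ᵐ t ∂(volume.restrict T), 0 < ρ t)
    (hbdd : ∃ M : ℝ, ∀ lam : {i // i ∈ I} → ℝ, Lag T I g ρ lam ≤ (M : EReal))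
    (lamstar : {i // i ∈ I} → ℝ)
    (hmax : ∀ lam : {i // i ∈ I} → ℝ, Lag T I g ρ lam ≤ Lag T I g ρ lamstar) :
    ∀ lam : {i // i ∈ I} → ℝ, lam ≠ 0 →
      (∀ t ∈ T, ∑ i ∈ I.attach, lam i * monom i.1 t ≤ 0) →
      ∑ i ∈ I.attach, g i.1 * lam i < 0 := by
  intro lam hlam hnp
  set μ := volume.restrict T with hμ
  set p : (Fin n → ℝ) → ℝ := fun t => ∑ i ∈ I.attach, lam i * monom i.1 t with hp
  set q : (Fin n → ℝ) → ℝ := fun t => ∑ i ∈ I.attach, lamstar i * monom i.1 t with hq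
  set G : ℝ := ∑ i ∈ I.attach, g i.1 * lam i with hG
  set A : ℝ := ∑ i ∈ I.attach, g i.1 * lamstar i with hA
  set B0 : ℝ≥0∞ := ∫⁻ t in T, ENNReal.ofReal (Real.exp (q t) * ρ t) with hB0
  set B1 : ℝ≥0∞ := ∫⁻ t in T, ENNReal.ofReal (Real.exp (q t + p t) * ρ t) with hB1
  have hpc : Continuous p := continuous_finset_sum _ fun i _ =>
    continuous_const.mul (monom_continuous i.1)
  have hqc : Continuous q := continuous_finset_sum _ fun i _ =>
    continuous_const.mul (monom_continuous i.1)
  have hLagstar : Lag T I g ρ lamstar = ((A : ℝ) : EReal) - ((B0 : ℝ≥0∞) : EReal) := rfl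
  -- B0 is finite
  have hintρ : (∫⁻ t in T, ENNReal.ofReal (ρ t)) ≠ ⊤ := by
    have hle : (∫⁻ t in T, ENNReal.ofReal (ρ t)) ≤ ∫⁻ t in T, (‖ρ t‖₊ : ℝ≥0∞) := by
      refine lintegral_mono fun t => ?_
      rw [show ((‖ρ t‖₊ : ℝ≥0∞)) = ENNReal.ofReal ‖ρ t‖ from (ofReal_norm (ρ t)).symm]
      exact ENNReal.ofReal_le_ofReal (le_abs_self _)
    exact (lt_of_le_of_lt hle hρint.2).ne
  have hLag0 : Lag T I g ρ 0 = ((0 : ℝ) : EReal) - ((∫⁻ t in T, ENNReal.ofReal (ρ t) : ℝ≥0∞) : EReal) := by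
    unfold Lag
    simp only [Pi.zero_apply, mul_zero, zero_mul, Finset.sum_const_zero, Real.exp_zero, one_mul]
  have hB0top : B0 ≠ ⊤ := by
    intro htop
    have h0 := hmax 0
    rw [hLag0, hLagstar, htop, EReal.coe_ennreal_top, EReal.sub_top, le_bot_iff] at h0
    rw [hcoeE _ hintρ] at h0
    rw [show ((0:ℝ):EReal) - (((∫⁻ t in T, ENNReal.ofReal (ρ t)).toReal : ℝ) : EReal)
      = (((0:ℝ) - (∫⁻ t in T, ENNReal.ofReal (ρ t)).toReal : ℝ) : EReal) by norm_cast] at h0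
    exact EReal.coe_ne_bot _ h0
  -- B1 ≤ B0
  have hB1le : B1 ≤ B0 := by
    refine lintegral_mono_ae ?_
    filter_upwards [hρpos, ae_restrict_mem hTclosed.measurableSet] with t hρt htT
    refine ENNReal.ofReal_le_ofReal (mul_le_mul_of_nonneg_right ?_ hρt.le)
    exact Real.exp_le_exp.mpr (by linarith [hnp t htT])
  have hB1top : B1 ≠ ⊤ := fun h => hB0top (top_le_iff.mp (h ▸ hB1le))
  -- main inequality from maximality at lamstar + lam
  have hsumA : ∑ i ∈ I.attach, g i.1 * (lamstar + lam) i = A + G := by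
    simp only [hA, hG, Pi.add_apply, mul_add, Finset.sum_add_distrib]
  have hsumP : ∀ t, ∑ i ∈ I.attach, (lamstar + lam) i * monom i.1 t = q t + p t := by
    intro t
    simp only [hq, hp, Pi.add_apply, add_mul, Finset.sum_add_distrib]
  have hLag1 : Lag T I g ρ (lamstar + lam) = ((A + G : ℝ) : EReal) - ((B1 : ℝ≥0∞) : EReal) := by
    unfold Lag
    rw [hsumA]
    congr 2
    exact lintegral_congr fun t => by rw [hsumP t]
  have hmain := hmax (lamstar + lam)
  rw [hLag1, hLagstar, hcoeE _ hB0top, hcoeE _ hB1top] at hmain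
  rw [show ((A + G : ℝ) : EReal) - ((B1.toReal : ℝ) : EReal) = ((A + G - B1.toReal : ℝ) : EReal) by norm_cast,
    show ((A : ℝ) : EReal) - ((B0.toReal : ℝ) : EReal) = ((A - B0.toReal : ℝ) : EReal) by norm_cast,
    EReal.coe_le_coe_iff] at hmain
  have htR : B1.toReal ≤ B0.toReal := ENNReal.toReal_mono hB0top hB1le
  have hGle : G ≤ 0 := by linarith
  rcases lt_or_eq_of_le hGle with h | hG0
  · exact h
  -- case G = 0 : derive contradiction
  exfalso
  have hBeq : B1 = B0 := by
    rw [← ENNReal.toReal_eq_toReal_iff' hB1top hB0top]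
    linarith
  -- f1 = f0 a.e.
  set f0 : (Fin n → ℝ) → ℝ≥0∞ := fun t => ENNReal.ofReal (Real.exp (q t) * ρ t) with hf0
  set f1 : (Fin n → ℝ) → ℝ≥0∞ := fun t => ENNReal.ofReal (Real.exp (q t + p t) * ρ t) with hf1
  have hρm : AEMeasurable ρ μ := hρint.aemeasurable
  have hf0m : AEMeasurable f0 μ :=
    (((Real.continuous_exp.comp hqc).aemeasurable.mul hρm)).ennreal_ofReal
  have hf1m : AEMeasurable f1 μ :=
    (((Real.continuous_exp.comp (hqc.add hpc)).aemeasurable.mul hρm)).ennreal_ofReal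
  have hle_ae : f1 ≤ᵐ[μ] f0 := by
    filter_upwards [hρpos, ae_restrict_mem hTclosed.measurableSet] with t hρt htT
    refine ENNReal.ofReal_le_ofReal (mul_le_mul_of_nonneg_right ?_ hρt.le)
    exact Real.exp_le_exp.mpr (by linarith [hnp t htT])
  have hsub : ∫⁻ t, (f0 t - f1 t) ∂μ = 0 := by
    rw [lintegral_sub' hf1m (by rw [hμ]; exact hB1top) hle_ae]
    rw [hμ]
    rw [show (∫⁻ t in T, f0 t) = B0 from rfl, show (∫⁻ t in T, f1 t) = B1 from rfl, hBeq]
    exact tsub_self _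
  have heq0 : (fun t => f0 t - f1 t) =ᵐ[μ] 0 :=
    (lintegral_eq_zero_iff' (hf0m.sub hf1m)).mp hsub
  have hp0 : ∀ᵐ t ∂μ, p t = 0 := by
    filter_upwards [heq0, hρpos, ae_restrict_mem hTclosed.measurableSet] with t h1 hρt htT
    have hle1 : f0 t ≤ f1 t := tsub_eq_zero_iff_le.mp h1
    have heq : f0 t = f1 t := le_antisymm hle1 (by
      refine ENNReal.ofReal_le_ofReal (mul_le_mul_of_nonneg_right ?_ hρt.le)
      exact Real.exp_le_exp.mpr (by linarith [hnp t htT]))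
    rw [hf0, hf1] at heq
    simp only at heq
    rw [ENNReal.ofReal_eq_ofReal_iff
      (mul_nonneg (Real.exp_pos _).le hρt.le) (mul_nonneg (Real.exp_pos _).le hρt.le)] at heq
    have := mul_right_cancel₀ (ne_of_gt hρt) heq
    have := Real.exp_injective this
    linarith
  -- polynomial step
  obtain ⟨i₀, hi₀⟩ : ∃ i, lam i ≠ 0 := Function.ne_iff.mp hlam
  set P : MvPolynomial (Fin n) ℝ :=
    ∑ i ∈ I.attach, MvPolynomial.monomial (Finsupp.equivFunOnFinite.symm i.1) (lam i) with hPdef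
  have heval : ∀ t, MvPolynomial.eval t P = p t := by
    intro t
    rw [hPdef, map_sum, hp]
    refine Finset.sum_congr rfl fun i _ => ?_
    rw [MvPolynomial.eval_monomial, Finsupp.prod_pow]
    simp [monom]
  have hP0 : P ≠ 0 := by
    intro h
    apply hi₀
    have hc := congrArg (MvPolynomial.coeff (Finsupp.equivFunOnFinite.symm i₀.1)) h
    rw [hPdef, MvPolynomial.coeff_sum] at hc
    simp only [MvPolynomial.coeff_monomial, MvPolynomial.coeff_zero] at hc
    rwa [Finset.sum_eq_single_of_mem i₀ (Finset.mem_attach _ _)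
      (fun i _ hne => if_neg (fun hh => hne (Subtype.ext
        (Finsupp.equivFunOnFinite.symm.injective hh)))), if_pos rfl] at hc
  have hnull : volume {t : Fin n → ℝ | p t = 0} = 0 := by
    have : {t : Fin n → ℝ | p t = 0} = {t | MvPolynomial.eval t P = 0} := by
      ext t; simp [heval]
    rw [this]
    exact mvpoly_zero_null P hP0
  -- T is a.e. contained in the null zero set : contradiction with hTpos
  have hZc : MeasurableSet {t : Fin n → ℝ | p t ≠ 0} :=
    (isOpen_compl_iff.mpr (isClosed_singleton.preimage hpc)).measurableSet
  have hrest : volume ({t : Fin n → ℝ | p t ≠ 0} ∩ T) = 0 := by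
    have := hp0
    rw [ae_iff] at this
    rw [hμ, Measure.restrict_apply hZc] at this
    exact this
  have hTsub : T ⊆ {t : Fin n → ℝ | p t = 0} ∪ ({t : Fin n → ℝ | p t ≠ 0} ∩ T) := by
    intro t ht
    by_cases hpt : p t = 0
    · exact Or.inl hpt
    · exact Or.inr ⟨hpt, ht⟩
  have : volume T = 0 := by
    have h1 := (measure_mono (μ := (volume : Measure (Fin n → ℝ))) hTsub).trans (measure_union_le _ _)
    rw [hnull, hrest] at h1
    simpa using h1
  exact absurd this hTpos.ne'
end

section
/- Let T ⊆ ℝ^n be a closed set, let I ⊆ ℤ_+^n be a finite set with 0 ∈ I, let g = (g_i)_{i∈I} be real numbers, and fix ρ ∈ L^1(T, dt) with ρ > 0 a.e. on T. Suppose the functional L(λ) = Σ_{i∈I} g_i λ_i − ∫_T e^{Σ_{i∈I} λ_i t^i} ρ(t) dt on ℝ^N (N = card I) is bounded from above. Then for every λ = (λ_i)_{i∈I} ∈ ℝ^N such that Σ_{i∈I} λ_i t^i ≤ 0 for all t ∈ T, one has Σ_{i∈I} g_i λ_i ≤ 0. -/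
open MeasureTheory Real ENNReal

/-- If the Lagrangian `L` is bounded above, then the Riesz functional of `g` is nonpositive
on every polynomial `∑_{i∈I} λ_i X^i` that is nonpositive on `T`. -/
theorem stmt_10 {n : ℕ}
    (T : Set (Fin n → ℝ)) (hTclosed : IsClosed T)
    (I : Finset (Fin n → ℕ)) (hI0 : (0 : Fin n → ℕ) ∈ I)
    (g : (Fin n → ℕ) → ℝ)
    (ρ : (Fin n → ℝ) → ℝ) (hρint : Integrable ρ (volume.restrict T))
    (hρpos : ∀ᵐ t ∂(volume.restrict T), 0 < ρ t)
    (hbdd : ∃ M : ℝ, ∀ lam : {i // i ∈ I} → ℝ, Lag T I g ρ lam ≤ (M : EReal)) :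
    ∀ lam : {i // i ∈ I} → ℝ,
      (∀ t ∈ T, ∑ i ∈ I.attach, lam i * monom i.1 t ≤ 0) →
      ∑ i ∈ I.attach, g i.1 * lam i ≤ 0 := by
  intro lam hlam
  by_contra hS
  push_neg at hS
  set S := ∑ i ∈ I.attach, g i.1 * lam i with hSdef
  obtain ⟨M, hM⟩ := hbdd
  set K := ∫⁻ t in T, ENNReal.ofReal (ρ t) with hKdef
  have hKfin : K < ⊤ := by
    refine lt_of_le_of_lt (lintegral_mono fun t => ?_) hρint.2
    calc ENNReal.ofReal (ρ t) ≤ ENNReal.ofReal ‖ρ t‖ :=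
          ENNReal.ofReal_le_ofReal (le_abs_self _)
      _ = ‖ρ t‖ₑ := ofReal_norm_eq_enorm _
  -- for any c > 0, we get c * S ≤ M + K.toReal
  have key : ∀ c : ℝ, 0 < c → c * S ≤ M + K.toReal := by
    intro c hc
    set lam' : {i // i ∈ I} → ℝ := fun i => c * lam i with hlam'def
    set Lint : ℝ≥0∞ :=
      ∫⁻ t in T, ENNReal.ofReal (Real.exp (∑ i ∈ I.attach, lam' i * monom i.1 t) * ρ t)
      with hLintdef
    have hLintK : Lint ≤ K := by
      refine lintegral_mono_ae ?_
      filter_upwards [ae_restrict_mem hTclosed.measurableSet, hρpos] with t ht hρt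
      have hsum : ∑ i ∈ I.attach, lam' i * monom i.1 t
          = c * ∑ i ∈ I.attach, lam i * monom i.1 t := by
        rw [Finset.mul_sum]
        exact Finset.sum_congr rfl fun i _ => by simp [hlam'def]; ring
      have hq : ∑ i ∈ I.attach, lam' i * monom i.1 t ≤ 0 := by
        rw [hsum]; exact mul_nonpos_of_nonneg_of_nonpos hc.le (hlam t ht)
      have hexp : Real.exp (∑ i ∈ I.attach, lam' i * monom i.1 t) ≤ 1 :=
        Real.exp_le_one_iff.mpr hq
      exact ENNReal.ofReal_le_ofReal (mul_le_of_le_one_left hρt.le hexp)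
    have hLintfin : Lint ≠ ⊤ := (lt_of_le_of_lt hLintK hKfin).ne
    have hsum' : ∑ i ∈ I.attach, g i.1 * lam' i = c * S := by
      rw [hSdef, Finset.mul_sum]
      exact Finset.sum_congr rfl fun i _ => by simp [hlam'def]; ring
    have hL := hM lam'
    rw [Lag, hsum'] at hL
    have hcast : ((Lint : ℝ≥0∞) : EReal) = ((Lint.toReal : ℝ) : EReal) := by
      conv_lhs => rw [← ENNReal.ofReal_toReal hLintfin]
      rw [EReal.coe_ennreal_ofReal, max_eq_left ENNReal.toReal_nonneg]
    rw [hcast] at hL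
    rw [← EReal.coe_sub] at hL
    have hreal : c * S - Lint.toReal ≤ M := EReal.coe_le_coe_iff.mp hL
    have hle : Lint.toReal ≤ K.toReal := ENNReal.toReal_mono hKfin.ne hLintK
    linarith
  have hKnn : (0:ℝ) ≤ K.toReal := ENNReal.toReal_nonneg
  set c := (|M| + K.toReal + 1) / S with hcdef
  have hcpos : 0 < c := div_pos (by positivity) hS
  have hcS : c * S = |M| + K.toReal + 1 := div_mul_cancel₀ _ hS.ne'
  have := key c hcpos
  rw [hcS] at this
  have := le_abs_self M
  linarith
end
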